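/- Let 𝓜 be a family of non-trivial vertex-disjoint paths in a graph G that is a size-minimum (d,k)-extension of itself. Then for any two distinct paths P₁, P₂ ∈ 𝓜, any vertex x in the k-end of P₁ and any vertex y in the k-end of P₂, any a ∈ N(x) \ V(𝓜) and b ∈ N(y) \ V(𝓜), there is no a–b path of length at most d in G − V(𝓜). -/

import Mathlib

open Finset

variable {V : Type*}

/-- A path in `G`, packaged with its endpoints. -/
abbrev PathIn (G : SimpleGraph V) := Σ u : V, Σ v : V, {w : G.Walk u v // w.IsPath}

/-- The length of a packaged path. -/
def plen {G : SimpleGraph V} (p : PathIn G) : ℕ := p.2.2.1.length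

/-- The support (vertex list) of a packaged path. -/
def psupp {G : SimpleGraph V} (p : PathIn G) : List V := p.2.2.1.support

/-- The union of the vertex sets of the paths of a family. -/
def Vset [DecidableEq V] {G : SimpleGraph V} (M : Finset (PathIn G)) : Finset V :=
  M.biUnion (fun p => (psupp p).toFinset)

/-- The union of the edge sets of the paths of a family. -/
def Eset [DecidableEq V] {G : SimpleGraph V} (M : Finset (PathIn G)) : Finset (Sym2 V) :=
  M.biUnion (fun p => p.2.2.1.edges.toFinset)

/-- A family of non-trivial vertex-disjoint paths. -/
def goodFam {G : SimpleGraph V} (M : Finset (PathIn G)) : Prop :=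
  (∀ p ∈ M, 0 < plen p) ∧
  (∀ p ∈ M, ∀ q ∈ M, p ≠ q → ∀ v, v ∈ psupp p → v ∉ psupp q)

/-- `M'` is a `(d,k)`-extension of `M`. -/
def isExtension [DecidableEq V] {G : SimpleGraph V} (d k : ℕ)
    (M M' : Finset (PathIn G)) : Prop :=
  goodFam M' ∧ M'.card ≤ M.card ∧
  ((Eset M) \ (Eset M')).card ≤ 2 * (k - 1) * (M.card - M'.card) ∧
  ((Eset M') \ (Eset M)).card ≤ (d + 2) * (M.card - M'.card)

/-- `M` is a size-minimum `(d,k)`-extension of itself. -/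
def sizeMinSelf [DecidableEq V] {G : SimpleGraph V} (d k : ℕ)
    (M : Finset (PathIn G)) : Prop :=
  goodFam M ∧ ∀ M' : Finset (PathIn G), isExtension d k M M' → M.card ≤ M'.card

/-- The `k`-end of a path: vertices within path-distance `k-1` of an endpoint. -/
def kEnd [DecidableEq V] {G : SimpleGraph V} (k : ℕ) (p : PathIn G) : Finset V :=
  ((psupp p).take k).toFinset ∪ ((psupp p).reverse.take k).toFinset

section helpers
open SimpleGraph
variable [DecidableEq V] {G : SimpleGraph V}

lemma mem_Vset_of_mem {M : Finset (PathIn G)} {p : PathIn G} (hp : p ∈ M) {z : V}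
    (hz : z ∈ psupp p) : z ∈ Vset M :=
  Finset.mem_biUnion.2 ⟨p, hp, List.mem_toFinset.2 hz⟩

lemma mem_Eset_of_mem {M : Finset (PathIn G)} {p : PathIn G} (hp : p ∈ M) {e : Sym2 V}
    (he : e ∈ p.2.2.1.edges) : e ∈ Eset M :=
  Finset.mem_biUnion.2 ⟨p, hp, List.mem_toFinset.2 he⟩

lemma trunc {u v x : V} (w : G.Walk u v) (hw : w.IsPath) (k : ℕ)
    (hx : x ∈ w.support.reverse.take k) :
    ∃ W : G.Walk u x, W.IsPath ∧ (∀ e ∈ W.edges, e ∈ w.edges) ∧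
      (∀ z ∈ W.support, z ∈ w.support) ∧ w.length ≤ W.length + (k - 1) := by
  have hxs : x ∈ w.support := by
    have := List.take_subset _ _ hx
    simpa using this
  refine ⟨w.takeUntil x hxs, hw.takeUntil hxs,
    fun e he => w.edges_takeUntil_subset hxs he,
    fun z hz => w.support_takeUntil_subset hxs hz, ?_⟩
  have hspec := w.take_spec hxs
  have hlen : (w.takeUntil x hxs).length + (w.dropUntil x hxs).length = w.length := by
    conv_rhs => rw [← hspec]
    rw [Walk.length_append]
  set T := w.takeUntil x hxs with hT
  set D := w.dropUntil x hxs with hD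
  have hsup : w.support = T.support ++ D.support.tail := by
    conv_lhs => rw [← hspec]
    rw [Walk.support_append]
  have hxT : x ∈ T.support := Walk.end_mem_support T
  have hnodup : (T.support ++ D.support.tail).Nodup := by
    rw [← hsup]; exact hw.support_nodup
  have hxD : x ∉ D.support.tail := (List.disjoint_of_nodup_append hnodup) hxT
  have hlt : D.support.tail.length < k := by
    by_contra hge
    push_neg at hge
    have heq : w.support.reverse.take k = (D.support.tail.reverse).take k := by
      rw [hsup, List.reverse_append, List.take_append_of_le_length (by simpa using hge)]
    rw [heq] at hx
    exact hxD (List.mem_reverse.1 (List.take_subset _ _ hx))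
  have h1 : D.support.length = D.length + 1 := Walk.length_support D
  have h2 : D.support.tail.length = D.support.length - 1 := List.length_tail
  omega

lemma endTrunc (k : ℕ) (p : PathIn G) {x : V} (hx : x ∈ kEnd k p) :
    ∃ c, ∃ W : G.Walk c x, W.IsPath ∧ (∀ e ∈ W.edges, e ∈ p.2.2.1.edges) ∧
      (∀ z ∈ W.support, z ∈ psupp p) ∧ plen p ≤ W.length + (k - 1) := by
  obtain ⟨u, v, w, hw⟩ := p
  simp only [kEnd, Finset.mem_union, List.mem_toFinset, psupp] at hx
  rcases hx with hx | hx
  · obtain ⟨W, h1, h2, h3, h4⟩ := trunc w.reverse hw.reverse k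
      (by simpa [Walk.support_reverse] using hx)
    refine ⟨v, W, h1, fun e he => ?_, fun z hz => ?_, ?_⟩
    · have := h2 e he; rwa [Walk.edges_reverse, List.mem_reverse] at this
    · have := h3 z hz; rwa [Walk.support_reverse, List.mem_reverse] at this
    · simpa [plen, Walk.length_reverse] using h4
  · obtain ⟨W, h1, h2, h3, h4⟩ := trunc w hw k hx
    exact ⟨u, W, h1, h2, h3, h4⟩

lemma card_sdiff_trunc (k : ℕ) {c t : V} (p : PathIn G) (W : G.Walk c t)
    (hWe : ∀ e ∈ W.edges, e ∈ p.2.2.1.edges) (hWp : W.IsPath)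
    (hWl : plen p ≤ W.length + (k - 1)) :
    (p.2.2.1.edges.toFinset \ W.edges.toFinset).card ≤ k - 1 := by
  have hsubW : W.edges.toFinset ⊆ p.2.2.1.edges.toFinset :=
    fun e he => List.mem_toFinset.2 (hWe e (List.mem_toFinset.1 he))
  rw [Finset.card_sdiff_of_subset hsubW]
  have e1 : p.2.2.1.edges.toFinset.card = plen p := by
    rw [List.toFinset_card_of_nodup p.2.2.2.isTrail.edges_nodup]
    exact Walk.length_edges _
  have e2 : W.edges.toFinset.card = W.length := by
    rw [List.toFinset_card_of_nodup hWp.isTrail.edges_nodup]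
    exact Walk.length_edges _
  omega

end helpers

open SimpleGraph

/-- in a size-minimum `(d,k)`-self-extension `M`, for distinct paths
`P₁, P₂ ∈ M`, `x` in the `k`-end of `P₁`, `y` in the `k`-end of `P₂`, and neighbors
`a` of `x` and `b` of `y` outside `V(M)`, there is no `a`–`b` path of length at most
`d` in `G − V(M)`. -/
theorem stmt4 [DecidableEq V] {G : SimpleGraph V} (d k : ℕ) (hk : 1 ≤ k)
    (M : Finset (PathIn G)) (hM : sizeMinSelf d k M)
    (P₁ P₂ : PathIn G) (hP₁ : P₁ ∈ M) (hP₂ : P₂ ∈ M) (hne : P₁ ≠ P₂)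
    (x y : V) (hx : x ∈ kEnd k P₁) (hy : y ∈ kEnd k P₂)
    (a b : V) (hxa : G.Adj x a) (hyb : G.Adj y b)
    (haM : a ∉ Vset M) (hbM : b ∉ Vset M) :
    ¬ ∃ w : G.Walk a b, w.IsPath ∧ w.length ≤ d ∧ ∀ v ∈ w.support, v ∉ Vset M := by
  rintro ⟨w, hwp, hwd, hwav⟩
  obtain ⟨⟨hnt, hdisj⟩, hmin⟩ := hM
  obtain ⟨c₁, W₁, hW₁p, hW₁e, hW₁s, hW₁l⟩ := endTrunc k P₁ hx
  obtain ⟨c₂, W₂, hW₂p, hW₂e, hW₂s, hW₂l⟩ := endTrunc k P₂ hy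
  -- the merged walk
  set Qw : G.Walk c₁ c₂ :=
    W₁.append (Walk.cons hxa (w.append (Walk.cons hyb.symm W₂.reverse))) with hQw
  have hQsup : Qw.support = W₁.support ++ (w.support ++ W₂.reverse.support) := by
    simp [hQw, Walk.support_append, Walk.support_cons]
  have h12 : ∀ z ∈ psupp P₁, z ∉ psupp P₂ := hdisj P₁ hP₁ P₂ hP₂ hne
  have hQnd : Qw.support.Nodup := by
    rw [hQsup]
    refine List.nodup_append.2 ⟨hW₁p.support_nodup, List.nodup_append.2
      ⟨hwp.support_nodup, ?_, ?_⟩, ?_⟩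
    · rw [Walk.support_reverse, List.nodup_reverse]; exact hW₂p.support_nodup
    · intro z hz z' hz2 hzz
      rw [← hzz] at hz2
      rw [Walk.support_reverse, List.mem_reverse] at hz2
      exact hwav z hz (mem_Vset_of_mem hP₂ (hW₂s z hz2))
    · intro z hz z' hz2 hzz
      rw [← hzz] at hz2
      have hzP₁ : z ∈ psupp P₁ := hW₁s z hz
      rcases List.mem_append.1 hz2 with h | h
      · exact hwav z h (mem_Vset_of_mem hP₁ hzP₁)
      · rw [Walk.support_reverse, List.mem_reverse] at h
        exact h12 z hzP₁ (hW₂s z h)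
  have hQp : Qw.IsPath := Walk.IsPath.mk' hQnd
  set Q : PathIn G := ⟨c₁, c₂, Qw, hQp⟩ with hQ
  have hQsupp : psupp Q = Qw.support := rfl
  have hQed : Qw.edges = W₁.edges ++ (s(x,a) :: (w.edges ++ (s(b,y) :: W₂.reverse.edges))) := by
    simp [hQw, Walk.edges_append, Walk.edges_cons]
  have haQ : a ∈ psupp Q := by
    rw [hQsupp, hQsup]
    exact List.mem_append.2 (Or.inr (List.mem_append.2 (Or.inl w.start_mem_support)))
  have hQM : Q ∉ M := fun h => haM (mem_Vset_of_mem h haQ)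
  set M' : Finset (PathIn G) := insert Q ((M.erase P₁).erase P₂) with hM'
  have hmemM' : ∀ p, p ∈ M' ↔ p = Q ∨ (p ∈ M ∧ p ≠ P₁ ∧ p ≠ P₂) := by
    intro p
    simp only [hM', Finset.mem_insert, Finset.mem_erase]
    tauto
  have hP₂e : P₂ ∈ M.erase P₁ := Finset.mem_erase.2 ⟨fun h => hne (h ▸ rfl), hP₂⟩
  have hQnot' : Q ∉ (M.erase P₁).erase P₂ :=
    fun h => hQM (Finset.mem_of_mem_erase (Finset.mem_of_mem_erase h))
  have hcard2 : 2 ≤ M.card := by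
    have := Finset.card_erase_of_mem hP₁
    have h2 := Finset.card_pos.2 ⟨P₂, hP₂e⟩
    omega
  have hcardM' : M'.card = M.card - 1 := by
    rw [hM', Finset.card_insert_of_notMem hQnot', Finset.card_erase_of_mem hP₂e,
      Finset.card_erase_of_mem hP₁]
    omega
  have hμ : M.card - M'.card = 1 := by omega
  -- disjointness of Q from old paths
  have hQold : ∀ p ∈ M, p ≠ P₁ → p ≠ P₂ → ∀ z, z ∈ psupp Q → z ∉ psupp p := by
    intro p hp h1 h2 z hz hzp
    rw [hQsupp, hQsup] at hz
    rcases List.mem_append.1 hz with h | h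
    · exact hdisj P₁ hP₁ p hp (fun e => h1 e.symm) z (hW₁s z h) hzp
    · rcases List.mem_append.1 h with h | h
      · exact hwav z h (mem_Vset_of_mem hp hzp)
      · rw [Walk.support_reverse, List.mem_reverse] at h
        exact hdisj P₂ hP₂ p hp (fun e => h2 e.symm) z (hW₂s z h) hzp
  have hgood' : goodFam M' := by
    constructor
    · intro p hp
      rcases (hmemM' p).1 hp with rfl | ⟨hpM, _, _⟩
      · have : 0 < Qw.length := by
          simp [hQw, Walk.length_append, Walk.length_cons]
        exact this
      · exact hnt p hpM
    · intro p hp q hq hpq z hzp hzq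
      rcases (hmemM' p).1 hp with rfl | ⟨hpM, hp1, hp2⟩
      · rcases (hmemM' q).1 hq with rfl | ⟨hqM, hq1, hq2⟩
        · exact hpq rfl
        · exact hQold q hqM hq1 hq2 z hzp hzq
      · rcases (hmemM' q).1 hq with rfl | ⟨hqM, hq1, hq2⟩
        · exact hQold p hpM hp1 hp2 z hzq hzp
        · exact hdisj p hpM q hqM hpq z hzp hzq
  -- edge bound 1 : Eset M \ Eset M'
  have hEQ : ∀ e ∈ Qw.edges, e ∈ Eset M' :=
    fun e he => mem_Eset_of_mem (Finset.mem_insert_self Q _) he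
  have hsub1 : (Eset M) \ (Eset M') ⊆
      (P₁.2.2.1.edges.toFinset \ W₁.edges.toFinset) ∪
      (P₂.2.2.1.edges.toFinset \ W₂.edges.toFinset) := by
    intro e he
    obtain ⟨heM, heM'⟩ := Finset.mem_sdiff.1 he
    obtain ⟨p, hp, hep⟩ := Finset.mem_biUnion.1 heM
    rw [List.mem_toFinset] at hep
    by_cases h1 : p = P₁
    · subst h1
      refine Finset.mem_union_left _ (Finset.mem_sdiff.2
        ⟨List.mem_toFinset.2 hep, fun hW => heM' ?_⟩)
      refine hEQ e ?_
      rw [hQed]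
      exact List.mem_append.2 (Or.inl (List.mem_toFinset.1 hW))
    · by_cases h2 : p = P₂
      · subst h2
        refine Finset.mem_union_right _ (Finset.mem_sdiff.2
          ⟨List.mem_toFinset.2 hep, fun hW => heM' ?_⟩)
        refine hEQ e ?_
        rw [hQed]
        refine List.mem_append.2 (Or.inr ?_)
        refine List.mem_cons_of_mem _ (List.mem_append.2 (Or.inr (List.mem_cons_of_mem _ ?_)))
        rw [Walk.edges_reverse, List.mem_reverse]
        exact List.mem_toFinset.1 hW
      · exact absurd (mem_Eset_of_mem ((hmemM' p).2 (Or.inr ⟨hp, h1, h2⟩)) hep) heM'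
  have hb1 : ((Eset M) \ (Eset M')).card ≤ 2 * (k - 1) * (M.card - M'.card) := by
    have := Finset.card_le_card hsub1
    have h2 := Finset.card_union_le (P₁.2.2.1.edges.toFinset \ W₁.edges.toFinset)
      (P₂.2.2.1.edges.toFinset \ W₂.edges.toFinset)
    have c1 := card_sdiff_trunc k P₁ W₁ hW₁e hW₁p hW₁l
    have c2 := card_sdiff_trunc k P₂ W₂ hW₂e hW₂p hW₂l
    rw [hμ]
    omega
  -- edge bound 2 : Eset M' \ Eset M
  have hsub2 : (Eset M') \ (Eset M) ⊆
      insert s(x,a) (insert s(b,y) w.edges.toFinset) := by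
    intro e he
    obtain ⟨heM', heM⟩ := Finset.mem_sdiff.1 he
    obtain ⟨p, hp, hep⟩ := Finset.mem_biUnion.1 heM'
    rw [List.mem_toFinset] at hep
    rcases (hmemM' p).1 hp with rfl | ⟨hpM, _, _⟩
    · rw [hQed] at hep
      rcases List.mem_append.1 hep with h | h
      · exact absurd (mem_Eset_of_mem hP₁ (hW₁e e h)) heM
      · rcases List.mem_cons.1 h with h | h
        · exact Finset.mem_insert.2 (Or.inl h)
        · rcases List.mem_append.1 h with h | h
          · exact Finset.mem_insert.2 (Or.inr (Finset.mem_insert.2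
              (Or.inr (List.mem_toFinset.2 h))))
          · rcases List.mem_cons.1 h with h | h
            · exact Finset.mem_insert.2 (Or.inr (Finset.mem_insert.2 (Or.inl h)))
            · rw [Walk.edges_reverse, List.mem_reverse] at h
              exact absurd (mem_Eset_of_mem hP₂ (hW₂e e h)) heM
    · exact absurd (mem_Eset_of_mem hpM hep) heM
  have hb2 : ((Eset M') \ (Eset M)).card ≤ (d + 2) * (M.card - M'.card) := by
    have h1 := Finset.card_le_card hsub2
    have h2 : (insert s(x,a) (insert s(b,y) w.edges.toFinset)).card ≤ d + 2 := by
      have := Finset.card_insert_le s(x,a) (insert s(b,y) w.edges.toFinset)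
      have := Finset.card_insert_le s(b,y) w.edges.toFinset
      have h3 : w.edges.toFinset.card ≤ d := by
        have := List.toFinset_card_le w.edges
        have := Walk.length_edges w
        omega
      omega
    rw [hμ]
    omega
  have hext : isExtension d k M M' := ⟨hgood', by omega, hb1, hb2⟩
  have := hmin M' hext
  omega
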